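/- Let T > 0, let P : ℝ → ℂ be a continuous T-periodic function, and let C be a nonzero real constant. Then there exists a continuous T-periodic function Q : ℝ → ℂ and a constant D such that ∫₀^τ e^{Cτ′} P(τ′) dτ′ = D + e^{Cτ} Q(τ) for all τ ∈ ℝ, and moreover D = −Q(0). -/

import Mathlib

open Real

/-- Key integration lemma (Lemma 6.2): for a continuous `T`-periodic `P` and a
nonzero real constant `C`, the primitive of `e^{Cτ}P(τ)` is of the form
`D + e^{Cτ}Q(τ)` with `Q` continuous `T`-periodic and `D = -Q(0)`. -/
theorem primitive_of_exp_mul_periodic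
    (T : ℝ) (hT : 0 < T) (P : ℝ → ℂ) (hP : Continuous P)
    (hper : Function.Periodic P T) (C : ℝ) (hC : C ≠ 0) :
    ∃ Q : ℝ → ℂ, Continuous Q ∧ Function.Periodic Q T ∧ ∃ D : ℂ,
      (∀ τ : ℝ, (∫ s in (0:ℝ)..τ, Complex.exp ((C * s : ℝ) : ℂ) * P s)
        = D + Complex.exp ((C * τ : ℝ) : ℂ) * Q τ) ∧
      D = - Q 0 := by
  set f : ℝ → ℂ := fun s => Complex.exp ((C * s : ℝ) : ℂ) * P s with hf
  have hfc : Continuous f := by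
    apply Continuous.mul _ hP
    exact Complex.continuous_exp.comp (Complex.continuous_ofReal.comp (continuous_const.mul continuous_id))
  set F : ℝ → ℂ := fun τ => ∫ s in (0:ℝ)..τ, f s with hF
  have hFc : Continuous F := by
    apply intervalIntegral.continuous_primitive
    intro a b
    exact hfc.intervalIntegrable a b
  have hE : Complex.exp ((C * T : ℝ) : ℂ) ≠ 1 := by
    rw [← Complex.ofReal_exp]
    intro h
    have h' : Real.exp (C * T) = 1 := by exact_mod_cast h
    rw [← Real.exp_zero] at h'
    exact (mul_ne_zero hC hT.ne') (Real.exp_eq_exp.mp h')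
  set D : ℂ := F T / (1 - Complex.exp ((C * T : ℝ) : ℂ)) with hD
  set Q : ℝ → ℂ := fun τ => Complex.exp ((-(C * τ) : ℝ) : ℂ) * (F τ - D) with hQ
  have hkey : ∀ τ : ℝ, F (τ + T) = Complex.exp ((C * T : ℝ) : ℂ) * F τ + F T := by
    intro τ
    have h1 : F (τ + T) = F T + ∫ s in T..(τ + T), f s := by
      rw [hF]
      simp only
      rw [← intervalIntegral.integral_add_adjacent_intervals
        (hfc.intervalIntegrable 0 T) (hfc.intervalIntegrable T (τ + T))]
    have h2 : (∫ s in T..(τ + T), f s) = ∫ s in (0:ℝ)..τ, f (s + T) := by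
      rw [intervalIntegral.integral_comp_add_right]
      norm_num
    have h3 : (∫ s in (0:ℝ)..τ, f (s + T)) = Complex.exp ((C * T : ℝ) : ℂ) * F τ := by
      rw [hF]
      simp only
      rw [← intervalIntegral.integral_const_mul]
      apply intervalIntegral.integral_congr
      intro s _
      simp only [hf]
      rw [hper s, show C * (s + T) = C * T + C * s by ring, Complex.ofReal_add,
        Complex.exp_add, mul_assoc]
    rw [h1, h2, h3]; ring
  have hne : (1 : ℂ) - Complex.exp ((C * T : ℝ) : ℂ) ≠ 0 := sub_ne_zero.mpr (Ne.symm hE)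
  have hFTD : F T - D = -(Complex.exp ((C * T : ℝ) : ℂ) * D) := by
    have h2 : D * (1 - Complex.exp ((C * T : ℝ) : ℂ)) = F T := div_mul_cancel₀ _ hne
    rw [← h2]; ring
  refine ⟨Q, ?_, ?_, D, ?_, ?_⟩
  · apply Continuous.mul _ (hFc.sub continuous_const)
    exact Complex.continuous_exp.comp (Complex.continuous_ofReal.comp (continuous_const.mul continuous_id).neg)
  · intro τ
    simp only [hQ]
    have e1 : F (τ + T) - D = Complex.exp ((C * T : ℝ) : ℂ) * (F τ - D) := by
      linear_combination hkey τ + hFTD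
    rw [e1, ← mul_assoc, ← Complex.exp_add, ← Complex.ofReal_add,
      show -(C * (τ + T)) + C * T = -(C * τ) by ring]
  · intro τ
    simp only [hQ]
    rw [← mul_assoc, ← Complex.exp_add]
    norm_num
    rfl
  · simp [hQ, hF]
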